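/- arXiv:gr-qc/0104090 — 9 statements merged into one kernel-verified Lean document; each statement's English description precedes it below -/
import Mathlib

section
/- If a nonzero tensor T of rank r on a Lorentzian vector space is antisymmetric in some pair of its indices, then T does not have the dominant property, nor does -T (i.e., contracting T with r arbitrary causal future-pointing vectors cannot always yield a result of constant sign). -/
noncomputable section

/-- Minkowski signature factors: (+1, -1, ..., -1). -/
def eta {n : ℕ} (i : Fin (n + 1)) : ℝ := if i = 0 then 1 else -1

/-- The Minkowski (Lorentzian) inner product of signature (+,-,...,-). -/
def mink {n : ℕ} (u v : Fin (n + 1) → ℝ) : ℝ := ∑ i, eta i * u i * v i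

/-- A causal future-pointing vector. -/
def CausalFuture {n : ℕ} (u : Fin (n + 1) → ℝ) : Prop :=
  0 ≤ mink u u ∧ u ≠ 0 ∧ 0 < u 0

/-- A null future-pointing vector. -/
def NullFuture {n : ℕ} (u : Fin (n + 1) → ℝ) : Prop :=
  mink u u = 0 ∧ u ≠ 0 ∧ 0 < u 0

/-- A timelike future-pointing vector. -/
def TimelikeFuture {n : ℕ} (u : Fin (n + 1) → ℝ) : Prop :=
  0 < mink u u ∧ 0 < u 0

/-- The Lorentzian metric as a matrix (covariant components). -/
def gMat {n : ℕ} : Matrix (Fin (n + 1)) (Fin (n + 1)) ℝ := Matrix.diagonal eta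

/-- Contraction of a rank-2 covariant tensor with two vectors. -/
def quad {n : ℕ} (T : Matrix (Fin (n + 1)) (Fin (n + 1)) ℝ) (u v : Fin (n + 1) → ℝ) : ℝ :=
  ∑ a, ∑ b, u a * T a b * v b

/-- The dominant property for rank-2 tensors. -/
def DP2 {n : ℕ} (T : Matrix (Fin (n + 1)) (Fin (n + 1)) ℝ) : Prop :=
  ∀ u v, CausalFuture u → CausalFuture v → 0 ≤ quad T u v

/-- (T ₂×₂ T)_{ab} = T_{ac} T_b{}^c : contraction on the second index of each factor. -/
def sq2 {n : ℕ} (T : Matrix (Fin (n + 1)) (Fin (n + 1)) ℝ) :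
    Matrix (Fin (n + 1)) (Fin (n + 1)) ℝ :=
  Matrix.of fun a b => ∑ c, eta c * T a c * T b c

/-- (T ₁×₁ T)_{ab} = T_{ca} T^c{}_b : contraction on the first index of each factor. -/
def sq1 {n : ℕ} (T : Matrix (Fin (n + 1)) (Fin (n + 1)) ℝ) :
    Matrix (Fin (n + 1)) (Fin (n + 1)) ℝ :=
  Matrix.of fun a b => ∑ c, eta c * T c a * T c b

/-- The linear map v^a ↦ v^a T_a{}^b defined by a rank-2 tensor T. -/
def tmap {n : ℕ} (T : Matrix (Fin (n + 1)) (Fin (n + 1)) ℝ) (v : Fin (n + 1) → ℝ) :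
    Fin (n + 1) → ℝ := fun b => eta b * ∑ a, v a * T a b

/-- (A×B)_{ab} := A_{ca} B^c{}_b. -/
def xprod {n : ℕ} (A B : Matrix (Fin (n + 1)) (Fin (n + 1)) ℝ) :
    Matrix (Fin (n + 1)) (Fin (n + 1)) ℝ :=
  Matrix.of fun a b => ∑ c, eta c * A c a * B c b

/-- The dominant property for rank-r covariant tensors. -/
def DP {n r : ℕ} (T : MultilinearMap ℝ (fun _ : Fin r => (Fin (n + 1) → ℝ)) ℝ) : Prop :=
  ∀ u : Fin r → (Fin (n + 1) → ℝ), (∀ i, CausalFuture (u i)) → 0 ≤ T u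

/-- auxiliary causal vectors -/
def Wvec {n : ℕ} (a : Fin (n + 1)) : Fin (n + 1) → ℝ :=
  fun i => if i = 0 then 1 else if i = a then 1 else 0

lemma Wvec_causal {n : ℕ} (a : Fin (n + 1)) : CausalFuture (Wvec (n := n) a) := by
  refine ⟨?_, ?_, by simp [Wvec]⟩
  · unfold mink Wvec eta
    rcases eq_or_ne a 0 with h | h
    · subst h
      have : ∀ i : Fin (n+1), (if i = 0 then (1:ℝ) else -1) *
          (if i = 0 then (1:ℝ) else if i = 0 then 1 else 0) *
          (if i = 0 then (1:ℝ) else if i = 0 then 1 else 0) =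
          if i = 0 then 1 else 0 := by
        intro i; split <;> simp
      simp only [this]
      simp
    · have : ∀ i : Fin (n+1), (if i = 0 then (1:ℝ) else -1) *
          (if i = 0 then (1:ℝ) else if i = a then 1 else 0) *
          (if i = 0 then (1:ℝ) else if i = a then 1 else 0) =
          (if i = 0 then 1 else 0) + (if i = a then -1 else 0) := by
        intro i
        rcases eq_or_ne i 0 with hi | hi
        · subst hi; simp [Ne.symm h]
        · rcases eq_or_ne i a with ha | ha
          · subst ha; simp [hi]
          · simp [hi, ha]
      simp only [this, Finset.sum_add_distrib]
      simp [Ne.symm h]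
  · intro h
    have := congrFun h 0
    simp [Wvec] at this

/-- decomposition of basis vectors -/
lemma single_decomp {n : ℕ} (a : Fin (n + 1)) :
    (Pi.single a 1 : Fin (n+1) → ℝ) =
      ∑ s : Fin 2, (if s = 0 then (if a = 0 then (0:ℝ) else -1) else 1) •
        (if s = 0 then Wvec (n := n) 0 else Wvec a) := by
  funext i
  simp only [Fin.sum_univ_two]
  have h1 : (1 : Fin 2) ≠ 0 := by decide
  simp only [if_pos rfl, if_neg h1, Pi.add_apply, Pi.smul_apply, smul_eq_mul, Wvec,
    Pi.single_apply]
  rcases eq_or_ne a 0 with h | h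
  · subst h
    rcases eq_or_ne i 0 with hi | hi <;> simp [hi]
  · rcases eq_or_ne i 0 with hi | hi
    · subst hi; simp [Wvec, Ne.symm h, h]
    · rcases eq_or_ne i a with ha | ha
      · subst ha; simp [Wvec, hi, h]
      · simp [Wvec, hi, ha, h]

lemma anti_dp_zero {n r : ℕ} (T : MultilinearMap ℝ (fun _ : Fin r => (Fin (n + 1) → ℝ)) ℝ)
    (i j : Fin r)
    (hanti : ∀ u : Fin r → (Fin (n + 1) → ℝ), T (u ∘ Equiv.swap i j) = - T u)
    (hdp : DP T) : T = 0 := by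
  -- first: T vanishes on causal tuples
  have hvan : ∀ u : Fin r → (Fin (n + 1) → ℝ), (∀ k, CausalFuture (u k)) → T u = 0 := by
    intro u hu
    have h1 := hdp u hu
    have h2 := hdp (u ∘ Equiv.swap i j) (fun k => hu _)
    rw [hanti u] at h2
    linarith
  apply Module.Basis.ext_multilinear (fun _ => Pi.basisFun ℝ (Fin (n+1)))
  intro v
  simp only [Pi.basisFun_apply, MultilinearMap.zero_apply]
  have hd : (fun k => (Pi.single (v k) 1 : Fin (n+1) → ℝ)) =
      fun k => ∑ s : Fin 2, (if s = 0 then (if v k = 0 then (0:ℝ) else -1) else 1) •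
        (if s = 0 then Wvec (n := n) 0 else Wvec (v k)) := by
    funext k; exact single_decomp (v k)
  rw [hd, MultilinearMap.map_sum]
  apply Finset.sum_eq_zero
  intro f _
  rw [MultilinearMap.map_smul_univ]
  rw [hvan _ (fun k => by by_cases hk : f k = 0 <;> simp [hk, Wvec_causal])]
  simp

/-- a nonzero rank-r tensor antisymmetric in a pair of indices is not
in DP ∪ -DP. -/
theorem stmt0 {n r : ℕ} (T : MultilinearMap ℝ (fun _ : Fin r => (Fin (n + 1) → ℝ)) ℝ)
    (hT : T ≠ 0) (i j : Fin r) (hij : i ≠ j)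
    (hanti : ∀ u : Fin r → (Fin (n + 1) → ℝ), T (u ∘ Equiv.swap i j) = - T u) :
    ¬ DP T ∧ ¬ DP (-T) := by
  constructor
  · intro hdp
    exact hT (anti_dp_zero T i j hanti hdp)
  · intro hdp
    have hanti' : ∀ u : Fin r → (Fin (n + 1) → ℝ), (-T) (u ∘ Equiv.swap i j) = - (-T) u := by
      intro u
      simp [hanti u]
    have := anti_dp_zero (-T) i j hanti' hdp
    apply hT
    have : T = - -T := by simp
    rw [this, ‹(-T) = 0›]
    simp
end
end

section
/- If a rank-r tensor T has the dominant property and T(u,...,u) = 0 for some timelike vector u, then T = 0. -/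
noncomputable section

lemma timelike_causal {n : ℕ} (u : Fin (n + 1) → ℝ) (hu : TimelikeFuture u) :
    CausalFuture u := by
  refine ⟨le_of_lt hu.1, fun h => ?_, hu.2⟩
  have := hu.2
  rw [h] at this
  simp at this

/-- Openness of the timelike future cone along a line. -/
lemma timelike_open {n : ℕ} (u v : Fin (n + 1) → ℝ) (hu : TimelikeFuture u) :
    ∃ ε > (0:ℝ), ∀ t : ℝ, |t| < ε → TimelikeFuture (u + t • v) := by
  have hf : Continuous fun t : ℝ => mink (u + t • v) (u + t • v) := by
    unfold mink
    apply continuous_finset_sum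
    intro i _
    simp only [Pi.add_apply, Pi.smul_apply, smul_eq_mul]
    fun_prop
  have hg : Continuous fun t : ℝ => (u + t • v) 0 := by
    simp only [Pi.add_apply, Pi.smul_apply, smul_eq_mul]
    fun_prop
  have hopen : IsOpen {t : ℝ | 0 < mink (u + t • v) (u + t • v) ∧ 0 < (u + t • v) 0} := by
    have h1 := isOpen_lt (continuous_const : Continuous fun _ : ℝ => (0:ℝ)) hf
    have h2 := isOpen_lt (continuous_const : Continuous fun _ : ℝ => (0:ℝ)) hg
    exact h1.inter h2
  have h0 : (0:ℝ) ∈ {t : ℝ | 0 < mink (u + t • v) (u + t • v) ∧ 0 < (u + t • v) 0} := by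
    simp only [Set.mem_setOf_eq, zero_smul, add_zero]
    exact ⟨hu.1, hu.2⟩
  obtain ⟨ε, hε, hball⟩ := Metric.isOpen_iff.mp hopen 0 h0
  refine ⟨ε, hε, fun t ht => ?_⟩
  have : t ∈ Metric.ball (0:ℝ) ε := by
    simpa [Real.dist_eq] using ht
  exact hball this

/-- Stage 1: T vanishes when some slots are causal and the rest equal u'. -/
lemma stage1 {n r : ℕ} (T : MultilinearMap ℝ (fun _ : Fin r => (Fin (n + 1) → ℝ)) ℝ)
    (hDP : DP T) (u' : Fin (n + 1) → ℝ) (hu' : TimelikeFuture u')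
    (h0 : T (fun _ => u') = 0) (S : Finset (Fin r)) :
    ∀ w : Fin r → (Fin (n + 1) → ℝ), (∀ i ∈ S, CausalFuture (w i)) →
      (∀ i ∉ S, w i = u') → T w = 0 := by
  induction S using Finset.induction_on with
  | empty =>
    intro w _ hw2
    have : w = fun _ => u' := funext fun i => hw2 i (by simp)
    rw [this, h0]
  | @insert j S' hj ih =>
    intro w hw1 hw2
    obtain ⟨ε, hε, hball⟩ := timelike_open u' (w j) hu'
    have hz : T (Function.update w j u') = 0 := by
      apply ih
      · intro i hi
        have hij : i ≠ j := fun h => hj (h ▸ hi)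
        rw [Function.update_of_ne hij]
        exact hw1 i (Finset.mem_insert_of_mem hi)
      · intro i hi
        by_cases hij : i = j
        · subst hij; simp
        · rw [Function.update_of_ne hij]
          exact hw2 i (by simp [hij, hi])
    have key : ∀ t : ℝ, |t| < ε → 0 ≤ t * T w := by
      intro t ht
      have hC : CausalFuture (u' + t • w j) := timelike_causal _ (hball t ht)
      have hDPapp : 0 ≤ T (Function.update w j (u' + t • w j)) := by
        apply hDP
        intro i
        by_cases hij : i = j
        · subst hij; simpa using hC
        · rw [Function.update_of_ne hij]
          by_cases hiS : i ∈ S'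
          · exact hw1 i (Finset.mem_insert_of_mem hiS)
          · rw [hw2 i (by simp [hij, hiS])]
            exact timelike_causal _ hu'
      have hexp : T (Function.update w j (u' + t • w j))
          = T (Function.update w j u') + t * T w := by
        rw [T.map_update_add, T.map_update_smul, Function.update_eq_self]
        simp [smul_eq_mul]
      rw [hexp, hz, zero_add] at hDPapp
      exact hDPapp
    have h1 : 0 ≤ (ε/2) * T w := key (ε/2) (by rw [abs_of_pos (by linarith)]; linarith)
    have h2 : 0 ≤ (-(ε/2)) * T w := key (-(ε/2)) (by rw [abs_neg, abs_of_pos (by linarith)]; linarith)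
    nlinarith

/-- Stage 2: T vanishes when slots outside S are causal (others arbitrary). -/
lemma stage2 {n r : ℕ} (T : MultilinearMap ℝ (fun _ : Fin r => (Fin (n + 1) → ℝ)) ℝ)
    (hDP : DP T) (u' : Fin (n + 1) → ℝ) (hu' : TimelikeFuture u')
    (h0 : T (fun _ => u') = 0) (S : Finset (Fin r)) :
    ∀ w : Fin r → (Fin (n + 1) → ℝ), (∀ i ∉ S, CausalFuture (w i)) → T w = 0 := by
  induction S using Finset.induction_on with
  | empty =>
    intro w hw
    exact stage1 T hDP u' hu' h0 Finset.univ w (fun i _ => hw i (by simp)) (by simp)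
  | @insert j S' hj ih =>
    intro w hw
    obtain ⟨ε, hε, hball⟩ := timelike_open u' (w j) hu'
    have key : ∀ t : ℝ, |t| < ε → T (Function.update w j u') + t * T w = 0 := by
      intro t ht
      have hC : CausalFuture (u' + t • w j) := timelike_causal _ (hball t ht)
      have happ : T (Function.update w j (u' + t • w j)) = 0 := by
        apply ih
        intro i hi
        by_cases hij : i = j
        · subst hij; simpa using hC
        · rw [Function.update_of_ne hij]
          exact hw i (by simp [hij, hi])
      have hexp : T (Function.update w j (u' + t • w j))
          = T (Function.update w j u') + t * T w := by
        rw [T.map_update_add, T.map_update_smul, Function.update_eq_self]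
        simp [smul_eq_mul]
      rw [hexp] at happ
      exact happ
    have h1 := key 0 (by simpa using hε)
    have h2 := key (ε/2) (by rw [abs_of_pos (by linarith)]; linarith)
    have : (ε/2) * T w = 0 := by linarith
    have hε2 : (ε/2) ≠ 0 := by positivity
    exact (mul_eq_zero.mp this).resolve_left hε2

/-- if T ∈ DP and T(u,...,u) = 0 for a timelike u, then T = 0. -/
theorem stmt1 {n r : ℕ} (T : MultilinearMap ℝ (fun _ : Fin r => (Fin (n + 1) → ℝ)) ℝ)
    (hDP : DP T) (u : Fin (n + 1) → ℝ) (hu : 0 < mink u u)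
    (h0 : T (fun _ => u) = 0) : T = 0 := by
  have hu0 : u 0 ≠ 0 := by
    intro h
    have : mink u u ≤ 0 := by
      unfold mink
      apply Finset.sum_nonpos
      intro i _
      by_cases hi : i = 0
      · subst hi; rw [h]; simp
      · have : eta i = -1 := by simp [eta, hi]
        rw [this]
        nlinarith [sq_nonneg (u i)]
    linarith
  have hmneg : mink (-u) (-u) = mink u u := by
    unfold mink
    apply Finset.sum_congr rfl
    intro i _
    simp only [Pi.neg_apply]
    ring
  have hTneg : T (fun _ => -u) = 0 := by
    have : (fun _ : Fin r => -u) = fun i : Fin r => (-1:ℝ) • u := by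
      funext i; simp
    rw [this, T.map_smul_univ]
    rw [h0]
    simp
  rcases lt_or_gt_of_ne hu0 with hneg | hpos
  · have hu' : TimelikeFuture (-u) := ⟨by rw [hmneg]; exact hu, by simp; linarith⟩
    apply MultilinearMap.ext
    intro w
    rw [stage2 T hDP (-u) hu' hTneg Finset.univ w (fun i hi => absurd (Finset.mem_univ i) hi)]
    rfl
  · have hu' : TimelikeFuture u := ⟨hu, hpos⟩
    apply MultilinearMap.ext
    intro w
    rw [stage2 T hDP u hu' h0 Finset.univ w (fun i hi => absurd (Finset.mem_univ i) hi)]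
    rfl
end
end

section
/- A nonzero rank-r tensor T has the dominant property if and only if T(u_1,...,u_r) > 0 (strictly) for every choice of timelike future-pointing vectors u_1,...,u_r. -/
noncomputable section

/-- the unit future timelike vector -/
def e0v {n : ℕ} : Fin (n + 1) → ℝ := fun j => if j = 0 then 1 else 0

lemma ne_zero_of_pos0 {n : ℕ} {u : Fin (n + 1) → ℝ} (h : 0 < u 0) : u ≠ 0 := by
  intro h0; rw [h0] at h; simp at h

lemma causal_of_timelike {n : ℕ} {u : Fin (n + 1) → ℝ} (h : TimelikeFuture u) :
    CausalFuture u := ⟨h.1.le, ne_zero_of_pos0 h.2, h.2⟩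

lemma mink_expand {n : ℕ} (u : Fin (n + 1) → ℝ) (s : ℝ) :
    mink (u + s • e0v) (u + s • e0v) = mink u u + 2 * s * u 0 + s ^ 2 := by
  unfold mink
  simp only [Pi.add_apply, Pi.smul_apply, smul_eq_mul]
  have key : ∀ i : Fin (n + 1),
      eta i * (u i + s * e0v i) * (u i + s * e0v i)
        = eta i * u i * u i + (if i = 0 then 2 * s * u 0 + s ^ 2 else 0) := by
    intro i
    by_cases h : i = 0 <;> simp [eta, e0v, h] <;> ring
  rw [Finset.sum_congr rfl fun i _ => key i, Finset.sum_add_distrib,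
    Finset.sum_ite_eq' Finset.univ (0 : Fin (n + 1))]
  simp only [Finset.mem_univ, if_true]
  ring

lemma push_timelike {n : ℕ} {u : Fin (n + 1) → ℝ} (h : CausalFuture u) {s : ℝ} (hs : 0 < s) :
    TimelikeFuture (u + s • e0v) := by
  constructor
  · rw [mink_expand]
    have := h.1
    have := h.2.2
    nlinarith
  · have := h.2.2; simp [e0v]; linarith

lemma timelike_interior {n : ℕ} {u : Fin (n + 1) → ℝ} (hu : TimelikeFuture u)
    (w : Fin (n + 1) → ℝ) :
    ∃ ε : ℝ, 0 < ε ∧ CausalFuture (u + ε • w) ∧ CausalFuture (u + (-ε) • w) := by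
  have hc : Continuous fun s : ℝ => mink (u + s • w) (u + s • w) := by
    unfold mink
    simp only [Pi.add_apply, Pi.smul_apply, smul_eq_mul]
    fun_prop
  have hc2 : Continuous fun s : ℝ => (u + s • w) 0 := by
    simp only [Pi.add_apply, Pi.smul_apply, smul_eq_mul]
    fun_prop
  have h0 : (0:ℝ) < mink (u + (0:ℝ) • w) (u + (0:ℝ) • w) := by
    simpa using hu.1
  have h02 : (0:ℝ) < (u + (0:ℝ) • w) 0 := by simpa using hu.2
  have hev : ∀ᶠ s in nhds (0:ℝ),
      0 < mink (u + s • w) (u + s • w) ∧ 0 < (u + s • w) 0 :=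
    ((continuous_const.continuousAt.eventually_lt hc.continuousAt h0).and
      (continuous_const.continuousAt.eventually_lt hc2.continuousAt h02))
  rw [Metric.eventually_nhds_iff] at hev
  obtain ⟨δ, hδ, hball⟩ := hev
  refine ⟨δ / 2, by linarith, ?_, ?_⟩
  · obtain ⟨h1, h2⟩ := hball (y := δ/2)
      (by rw [Real.dist_eq, sub_zero, abs_of_pos] <;> linarith)
    exact ⟨h1.le, ne_zero_of_pos0 h2, h2⟩
  · obtain ⟨h1, h2⟩ := hball (y := -(δ/2))
      (by rw [Real.dist_eq, sub_zero, abs_of_neg] <;> linarith)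
    exact ⟨h1.le, ne_zero_of_pos0 h2, h2⟩

lemma slot_zero {n r : ℕ} {T : MultilinearMap ℝ (fun _ : Fin r => (Fin (n + 1) → ℝ)) ℝ}
    (hDP : DP T) {u : Fin r → (Fin (n + 1) → ℝ)} (hu : ∀ i, TimelikeFuture (u i))
    (h0 : T u = 0) (i : Fin r) (w : Fin (n + 1) → ℝ) :
    T (Function.update u i w) = 0 := by
  obtain ⟨ε, hε, hplus, hminus⟩ := timelike_interior (hu i) w
  have key : ∀ c : ℝ, CausalFuture (u i + c • w) →
      0 ≤ c * T (Function.update u i w) := by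
    intro c hc
    have hcaus : ∀ j, CausalFuture (Function.update u i (u i + c • w) j) := by
      intro j
      rcases eq_or_ne j i with rfl | hj
      · simpa using hc
      · simpa [Function.update_of_ne hj] using causal_of_timelike (hu j)
    have := hDP _ hcaus
    rwa [T.map_update_add, Function.update_eq_self, h0, zero_add, T.map_update_smul,
      smul_eq_mul] at this
  have h1 := key ε hplus
  have h2 := key (-ε) hminus
  nlinarith

lemma prop_zero {n r : ℕ} {T : MultilinearMap ℝ (fun _ : Fin r => (Fin (n + 1) → ℝ)) ℝ}
    (hDP : DP T) {u v : Fin r → (Fin (n + 1) → ℝ)} (hu : ∀ i, TimelikeFuture (u i))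
    (hv : ∀ i, TimelikeFuture (v i)) (h0 : T u = 0) : T v = 0 := by
  suffices h : ∀ k : ℕ, k ≤ r → T (fun i => if (i : ℕ) < k then v i else u i) = 0 by
    have := h r le_rfl
    have he : (fun i : Fin r => if (i : ℕ) < r then v i else u i) = v := by
      funext i; simp [i.isLt]
    rwa [he] at this
  intro k
  induction k with
  | zero =>
    intro _
    simpa using h0
  | succ k ih =>
    intro hk
    have hk' : k < r := hk
    set m := fun i : Fin r => if (i : ℕ) < k then v i else u i with hm
    have hmt : ∀ i, TimelikeFuture (m i) := by
      intro i
      by_cases h : (i : ℕ) < k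
      · simpa [hm, h] using hv i
      · simpa [hm, h] using hu i
    have h2 := slot_zero hDP hmt (ih (Nat.le_of_lt hk')) ⟨k, hk'⟩ (v ⟨k, hk'⟩)
    have he : (fun i : Fin r => if (i : ℕ) < k + 1 then v i else u i)
        = Function.update m ⟨k, hk'⟩ (v ⟨k, hk'⟩) := by
      funext i
      rcases eq_or_ne i ⟨k, hk'⟩ with rfl | hi
      · simp [Function.update_self]
      · have hik : (i : ℕ) ≠ k := fun h => hi (Fin.ext h)
        rw [Function.update_of_ne hi]
        simp only [hm]
        by_cases h : (i : ℕ) < k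
        · simp [h, Nat.lt_succ_of_lt h]
        · have : ¬ (i : ℕ) < k + 1 := by omega
          simp [h, this]
    rwa [he]

def bvec {n : ℕ} (i : Fin (n + 1)) : Fin (n + 1) → ℝ :=
  fun j => if j = 0 then 1 else if j = i then 1/2 else 0

lemma bvec_timelike {n : ℕ} (i : Fin (n + 1)) : TimelikeFuture (bvec i) := by
  refine ⟨?_, by simp [bvec]⟩
  unfold mink
  rcases eq_or_ne i 0 with rfl | hi
  · have key : ∀ j : Fin (n + 1), eta j * bvec 0 j * bvec 0 j
        = if j = 0 then 1 else 0 := by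
      intro j; by_cases h : j = 0 <;> simp [eta, bvec, h]
    rw [Finset.sum_congr rfl fun j _ => key j, Finset.sum_ite_eq' Finset.univ (0 : Fin (n+1))]
    simp
  · have key : ∀ j : Fin (n + 1), eta j * bvec i j * bvec i j
        = (if j = 0 then 1 else 0) + (if j = i then -(1/4 : ℝ) else 0) := by
      intro j
      rcases eq_or_ne j 0 with rfl | hj
      · simp [eta, bvec, Ne.symm hi]
      · by_cases h : j = i
        · subst h; simp [eta, bvec, hj]; norm_num
        · simp [eta, bvec, hj, h]
    rw [Finset.sum_congr rfl fun j _ => key j, Finset.sum_add_distrib,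
      Finset.sum_ite_eq' Finset.univ (0 : Fin (n+1)),
      Finset.sum_ite_eq' Finset.univ i]
    norm_num

/-- the matrix whose rows are `bvec i` -/
def bMat {n : ℕ} : Matrix (Fin (n + 1)) (Fin (n + 1)) ℝ :=
  Matrix.of fun i j => bvec i j

lemma bMat_det_ne_zero {n : ℕ} : (bMat (n := n)).det ≠ 0 := by
  have htri : (bMat (n := n)).BlockTriangular OrderDual.toDual := by
    intro i j hij
    have hij' : i < j := hij
    have hj0 : j ≠ 0 := by
      intro h; rw [h] at hij'; exact absurd hij' (by simp [Fin.le_def, Fin.lt_def])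
    have hji : j ≠ i := ne_of_gt hij'
    simp [bMat, bvec, hj0, hji]
  rw [Matrix.det_of_lowerTriangular _ htri]
  refine Finset.prod_ne_zero_iff.2 fun i _ => ?_
  by_cases h : i = 0 <;> simp [bMat, bvec, h]

def bBasis {n : ℕ} : Module.Basis (Fin (n + 1)) ℝ (Fin (n + 1) → ℝ) :=
  (Pi.basisFun ℝ (Fin (n + 1))).map
    ((bMat (n := n)).transpose.toLinearEquiv'
      (Matrix.invertibleOfIsUnitDet _ (by
        rw [Matrix.det_transpose]; exact (bMat_det_ne_zero).isUnit)))

lemma bBasis_apply {n : ℕ} (i : Fin (n + 1)) : bBasis (n := n) i = bvec i := by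
  funext j
  simp only [bBasis, Module.Basis.map_apply, Pi.basisFun_apply]
  rw [show ((bMat (n := n)).transpose.toLinearEquiv' _) (Pi.single i 1)
      = (bMat (n := n)).transpose.mulVec (Pi.single i 1) from rfl]
  simp [Matrix.mulVec, dotProduct, Pi.single_apply, bMat]

lemma multilinear_expand {n r : ℕ} (T : MultilinearMap ℝ (fun _ : Fin r => (Fin (n + 1) → ℝ)) ℝ)
    (v : Fin r → (Fin (n + 1) → ℝ)) :
    T v = ∑ k : Fin r → Fin (n + 1),
      (∏ i, v i (k i)) • T (fun i => Pi.single (k i) 1) := by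
  have h1 : v = fun i => ∑ j, v i j • (Pi.single j 1 : Fin (n + 1) → ℝ) := by
    funext i j
    simp [Finset.sum_apply, Pi.single_apply]
  conv_lhs => rw [h1, T.map_sum]
  exact Finset.sum_congr rfl fun k _ => T.map_smul_univ _ _


/-- a nonzero T is in DP iff it is strictly positive on timelike
future-pointing vectors. -/
theorem stmt2 {n r : ℕ} (T : MultilinearMap ℝ (fun _ : Fin r => (Fin (n + 1) → ℝ)) ℝ)
    (hT : T ≠ 0) :
    DP T ↔ ∀ u : Fin r → (Fin (n + 1) → ℝ), (∀ i, TimelikeFuture (u i)) → 0 < T u := by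
  constructor
  · intro hDP u hu
    rcases (hDP u fun i => causal_of_timelike (hu i)).lt_or_eq with h | h
    · exact h
    · exfalso
      apply hT
      refine Module.Basis.ext_multilinear (fun _ => bBasis (n := n)) fun k => ?_
      simp only [MultilinearMap.zero_apply]
      have he : (fun i : Fin r => bBasis (n := n) (k i)) = fun i => bvec (k i) := by
        funext i; rw [bBasis_apply]
      rw [he]
      exact prop_zero hDP hu (fun i => bvec_timelike (k i)) h.symm
  · intro h u hu
    set φ : ℝ → ℝ := fun s => ∑ k : Fin r → Fin (n + 1),
      (∏ i, (u i (k i) + s * e0v (k i))) • T (fun i => Pi.single (k i) 1) with hφ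
    have hφeq : ∀ s : ℝ, φ s = T (fun i => u i + s • e0v) := by
      intro s
      rw [multilinear_expand T (fun i => u i + s • e0v)]
      simp [hφ]
    have hcont : Continuous φ := by
      apply continuous_finset_sum
      intro k _
      exact (Continuous.smul (f := fun a : ℝ => ∏ i, (u i (k i) + a * e0v (k i)))
        (continuous_finset_prod _ fun i _ => by fun_prop) continuous_const)
    have hpos : ∀ s : ℝ, 0 < s → 0 < φ s := by
      intro s hs
      rw [hφeq]
      exact h _ (fun i => push_timelike (hu i) hs)
    have h0 : φ 0 = T u := by
      rw [hφeq]
      norm_num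
    have htend : Filter.Tendsto φ (nhdsWithin 0 (Set.Ioi 0)) (nhds (φ 0)) :=
      (hcont.continuousAt).continuousWithinAt
    have hge : (0:ℝ) ≤ φ 0 :=
      ge_of_tendsto htend
        (Filter.eventually_of_mem self_mem_nhdsWithin fun s hs => (hpos s hs).le)
    rwa [h0] at hge
end
end

section
/- A completely symmetric rank-r tensor T satisfies that its square (T×T) obtained by contracting one index from each factor vanishes if and only if T = f·k⊗...⊗k for some scalar f and some null vector k. -/
noncomputable section

/-- The square of a rank-(r+1) tensor obtained by contracting the last index of each
factor via the inverse metric. -/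
def sqLast {n r : ℕ} (T : MultilinearMap ℝ (fun _ : Fin (r + 1) => (Fin (n + 1) → ℝ)) ℝ)
    (u v : Fin r → (Fin (n + 1) → ℝ)) : ℝ :=
  ∑ c, eta c * T (Fin.snoc u (Pi.single c 1)) * T (Fin.snoc v (Pi.single c 1))


lemma null_zero {n : ℕ} (w : Fin (n+1) → ℝ) (h : mink w w = 0) (h0 : w 0 = 0) : w = 0 := by
  have key : ∀ i : Fin (n+1), eta i * w i * w i = -(w i * w i) := by
    intro i
    by_cases hi : i = 0
    · subst hi; rw [h0]; simp
    · simp only [eta, if_neg hi]; ring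
  have hsum : ∑ i, w i * w i = 0 := by
    have h' : ∑ i, eta i * w i * w i = 0 := h
    rw [Finset.sum_congr rfl (fun i _ => key i)] at h'
    simpa using h'
  funext i
  have := (Finset.sum_eq_zero_iff_of_nonneg (fun i _ => mul_self_nonneg (w i))).mp hsum i
    (Finset.mem_univ i)
  exact mul_self_eq_zero.mp this

lemma mink_bilin {n : ℕ} (x y : Fin (n+1) → ℝ) :
    mink (x 0 • y - y 0 • x) (x 0 • y - y 0 • x)
      = x 0 ^ 2 * mink y y - 2 * x 0 * y 0 * mink x y + y 0 ^ 2 * mink x x := by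
  simp only [mink, Finset.mul_sum, ← Finset.sum_sub_distrib, ← Finset.sum_add_distrib]
  refine Finset.sum_congr rfl fun i _ => ?_
  simp only [Pi.sub_apply, Pi.smul_apply, smul_eq_mul]
  ring

lemma null_orth {n : ℕ} (x y : Fin (n+1) → ℝ) (hx : mink x x = 0) (hy : mink y y = 0)
    (hxy : mink x y = 0) : x 0 • y = y 0 • x := by
  have hw : (x 0 • y - y 0 • x : Fin (n+1) → ℝ) = 0 := by
    apply null_zero
    · rw [mink_bilin, hx, hy, hxy]; ring
    · simp [mul_comm]
  exact sub_eq_zero.mp hw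

lemma expand_last {n r : ℕ} (T : MultilinearMap ℝ (fun _ : Fin (r + 1) => (Fin (n + 1) → ℝ)) ℝ)
    (u : Fin r → (Fin (n + 1) → ℝ)) (w : Fin (n + 1) → ℝ) :
    T (Fin.snoc u w) = ∑ c, w c * T (Fin.snoc u (Pi.single c 1)) := by
  have hw : w = ∑ c, w c • (Pi.single c 1 : Fin (n+1) → ℝ) := by
    have := pi_eq_sum_univ w
    convert this using 2 with c
    funext j
    simp [Pi.single_apply, eq_comm]
  calc T (Fin.snoc u w)
      = T (Function.update (Fin.snoc u w) (Fin.last r)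
          (∑ c, w c • (Pi.single c 1 : Fin (n+1) → ℝ))) := by
        rw [Fin.update_snoc_last, ← hw]
    _ = ∑ c, w c * T (Fin.snoc u (Pi.single c 1)) := by
        rw [T.map_update_sum]
        refine Finset.sum_congr rfl fun c _ => ?_
        rw [T.map_update_smul, Fin.update_snoc_last]
        simp

lemma mink_single {n : ℕ} (k : Fin (n+1) → ℝ) (c : Fin (n+1)) :
    mink k (Pi.single c 1) = eta c * k c := by
  simp only [mink, Pi.single_apply]
  rw [Finset.sum_eq_single c] <;> simp +contextual [eq_comm]

/-- a completely symmetric rank-r tensor has vanishing square iff it is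
f·k⊗...⊗k for a scalar f and a null vector k. -/
theorem stmt8 {n r : ℕ} (T : MultilinearMap ℝ (fun _ : Fin (r + 1) => (Fin (n + 1) → ℝ)) ℝ)
    (hsym : ∀ (σ : Equiv.Perm (Fin (r + 1))) (u : Fin (r + 1) → (Fin (n + 1) → ℝ)),
      T (u ∘ σ) = T u) :
    (∀ u v : Fin r → (Fin (n + 1) → ℝ), sqLast T u v = 0) ↔
      ∃ (f : ℝ) (k : Fin (n + 1) → ℝ), mink k k = 0 ∧
        ∀ u : Fin (r + 1) → (Fin (n + 1) → ℝ), T u = f * ∏ i, mink k (u i) := by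
  constructor
  · intro hsq
    set a : (Fin r → (Fin (n + 1) → ℝ)) → (Fin (n + 1) → ℝ) :=
      fun u c => T (Fin.snoc u (Pi.single c 1)) with ha
    have hmink : ∀ u v, mink (a u) (a v) = 0 := by
      intro u v
      have := hsq u v
      simpa [sqLast, mink, ha] using this
    by_cases hz : ∀ u, a u = 0
    · refine ⟨0, 0, by simp [mink], fun u => ?_⟩
      have h1 : T u = T (Fin.snoc (Fin.init u) (u (Fin.last r))) := by
        rw [Fin.snoc_init_self]
      rw [h1, expand_last]
      have h2 : ∀ c, T (Fin.snoc (Fin.init u) (Pi.single c 1)) = 0 := fun c =>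
        congrFun (hz (Fin.init u)) c
      simp [h2]
    · push_neg at hz
      obtain ⟨u₀, hu₀⟩ := hz
      set x : Fin (n+1) → ℝ := a u₀ with hx
      have hxx : mink x x = 0 := hmink u₀ u₀
      have hx0 : x 0 ≠ 0 := fun h0 => hu₀ (null_zero x hxx h0)
      have hprop : ∀ u, a u = (a u 0 / x 0) • x := by
        intro u
        have h := null_orth x (a u) hxx (hmink u u) (hmink u₀ u)
        funext c
        have hc := congrFun h c
        simp only [Pi.smul_apply, smul_eq_mul] at hc ⊢
        field_simp
        linarith [hc]
      set k : Fin (n+1) → ℝ := fun c => eta c * x c with hk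
      have hphi : ∀ v : Fin (n+1) → ℝ, mink k v = ∑ c, v c * x c := by
        intro v
        refine Finset.sum_congr rfl fun c _ => ?_
        have he : eta c * eta c = 1 := by
          by_cases hc : c = 0 <;> simp [eta, hc]
        simp only [hk]
        calc eta c * (eta c * x c) * v c = (eta c * eta c) * (x c * v c) := by ring
          _ = v c * x c := by rw [he]; ring
      have hkk : mink k k = 0 := by
        rw [hphi]
        calc (∑ c, k c * x c) = ∑ c, eta c * x c * x c :=
              Finset.sum_congr rfl fun c _ => by simp only [hk]
          _ = mink x x := rfl
          _ = 0 := hxx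
      set z : Fin (n+1) → ℝ := fun c => if c = (0 : Fin (n+1)) then (x 0)⁻¹ else 0 with hzdef
      have hphiz : mink k z = 1 := by
        rw [hphi]
        simp only [hzdef]
        rw [Finset.sum_eq_single (0 : Fin (n+1))]
        · simp [hx0]
        · intro b _ hb; simp [hb]
        · simp
      have hT : ∀ (u : Fin r → (Fin (n+1) → ℝ)) (w : Fin (n+1) → ℝ),
          T (Fin.snoc u w) = (a u 0 / x 0) * mink k w := by
        intro u w
        rw [expand_last, hphi, Finset.mul_sum]
        refine Finset.sum_congr rfl fun c _ => ?_
        have h1 : T (Fin.snoc u (Pi.single c 1)) = a u c := rfl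
        rw [h1, congrFun (hprop u) c]
        simp only [Pi.smul_apply, smul_eq_mul]
        ring
      have keylast : ∀ v : Fin (r+1) → (Fin (n+1) → ℝ),
          T v = T (Function.update v (Fin.last r) z) * mink k (v (Fin.last r)) := by
        intro v
        have h2 : Function.update v (Fin.last r) z = Fin.snoc (Fin.init v) z := by
          conv_lhs => rw [← Fin.snoc_init_self v]
          exact Fin.update_snoc_last _ _ _
        calc T v = T (Fin.snoc (Fin.init v) (v (Fin.last r))) := by rw [Fin.snoc_init_self]
          _ = (a (Fin.init v) 0 / x 0) * mink k (v (Fin.last r)) := hT _ _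
          _ = ((a (Fin.init v) 0 / x 0) * mink k z) * mink k (v (Fin.last r)) := by
              rw [hphiz, mul_one]
          _ = T (Fin.snoc (Fin.init v) z) * mink k (v (Fin.last r)) := by rw [hT]
          _ = T (Function.update v (Fin.last r) z) * mink k (v (Fin.last r)) := by rw [h2]
      have key : ∀ (u : Fin (r+1) → (Fin (n+1) → ℝ)) (i : Fin (r+1)),
          T u = T (Function.update u i z) * mink k (u i) := by
        intro u i
        set σ : Equiv.Perm (Fin (r+1)) := Equiv.swap i (Fin.last r) with hσ
        have h1 : T u = T (u ∘ σ) := (hsym σ u).symm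
        have h3 : (u ∘ σ) (Fin.last r) = u i := by
          simp [hσ, Equiv.swap_apply_right]
        have h4 : Function.update (u ∘ σ) (Fin.last r) z = (Function.update u i z) ∘ σ := by
          funext j
          by_cases hj : j = Fin.last r
          · subst hj
            simp only [Function.update_self, Function.comp_apply, hσ]
            rw [Equiv.swap_apply_right, Function.update_self]
          · have hσj : σ j ≠ i := by
              intro hc
              apply hj
              have h5 : σ (Fin.last r) = i := by simp [hσ, Equiv.swap_apply_right]
              exact σ.injective (hc.trans h5.symm)
            simp only [Function.comp_apply, Function.update_of_ne hj,
              Function.update_of_ne hσj]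
        rw [h1, keylast (u ∘ σ), h3, h4, hsym σ]
      refine ⟨T (fun _ => z), k, hkk, fun u => ?_⟩
      have main : ∀ s : Finset (Fin (r+1)), ∀ u : Fin (r+1) → (Fin (n+1) → ℝ),
          T u = T (fun j => if j ∈ s then z else u j) * ∏ j ∈ s, mink k (u j) := by
        intro s
        induction s using Finset.induction_on with
        | empty => intro u; simp
        | @insert i s hi ih =>
          intro u
          rw [key u i, ih (Function.update u i z)]
          have e1 : (fun j => if j ∈ s then z else Function.update u i z j)
              = fun j => if j ∈ insert i s then z else u j := by
            funext j
            by_cases hjs : j ∈ s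
            · simp [hjs, Finset.mem_insert, Or.inr hjs]
            · by_cases hji : j = i
              · subst hji; simp [hjs]
              · simp [hjs, hji, Function.update_of_ne hji]
          have e2 : ∏ j ∈ s, mink k (Function.update u i z j) = ∏ j ∈ s, mink k (u j) := by
            refine Finset.prod_congr rfl fun j hj => ?_
            rw [Function.update_of_ne (fun h => hi (by rw [← h]; exact hj))]
          rw [e1, e2, Finset.prod_insert hi]
          ring
      have hmain := main Finset.univ u
      simpa using hmain
  · rintro ⟨f, k, hkk, hT⟩ u v
    have hsnoc : ∀ (u : Fin r → (Fin (n+1) → ℝ)) (w : Fin (n+1) → ℝ),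
        (∏ i, mink k ((Fin.snoc u w : Fin (r+1) → (Fin (n+1) → ℝ)) i)) = (∏ i, mink k (u i)) * mink k w := by
      intro u w
      rw [Fin.prod_univ_castSucc]
      simp
    have hterm : ∀ c, eta c * T (Fin.snoc u (Pi.single c 1)) * T (Fin.snoc v (Pi.single c 1))
        = (f * (∏ i, mink k (u i))) * (f * (∏ i, mink k (v i))) * (eta c * k c * k c) := by
      intro c
      rw [hT, hT, hsnoc, hsnoc, mink_single]
      have he : eta c * eta c = 1 := by
        by_cases hc : c = 0 <;> simp [eta, hc]
      linear_combination (eta c * (f * ∏ i, mink k (u i)) * (f * ∏ i, mink k (v i)) *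
        (k c * k c)) * he
    calc sqLast T u v
        = ∑ c, (f * (∏ i, mink k (u i))) * (f * (∏ i, mink k (v i))) * (eta c * k c * k c) :=
          Finset.sum_congr rfl fun c _ => hterm c
      _ = (f * (∏ i, mink k (u i))) * (f * (∏ i, mink k (v i))) * ∑ c, eta c * k c * k c := by
          rw [Finset.mul_sum]
      _ = 0 := by
          have : (∑ c, eta c * k c * k c) = 0 := hkk
          rw [this, mul_zero]
end
end

section
/- If F is a nonzero antisymmetric bilinear form (2-form) on a Lorentzian vector space, then the symmetric rank-2 tensor (F×F)_{ab} = F_{ca} F^c{}_b does not have the dominant property. -/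
noncomputable section

private lemma key {n : ℕ} (F : Matrix (Fin (n + 1)) (Fin (n + 1)) ℝ)
    (j m : Fin (n + 1)) (hm : m ≠ 0)
    (hw0 : F 0 0 + F 0 j = 0) (hwm : F m 0 + F m j ≠ 0) : ¬ DP2 (sq1 F) := by
  intro h
  set u : Fin (n + 1) → ℝ :=
    fun c => (if c = 0 then 1 else 0) + (if c = j then 1 else 0) with hu
  have hw : ∀ c, ∑ a, F c a * u a = F c 0 + F c j := by
    intro c
    simp only [hu, mul_add, Finset.sum_add_distrib, mul_ite, mul_one, mul_zero,
      Finset.sum_ite_eq', Finset.mem_univ, if_true]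
  have hcf : CausalFuture u := by
    refine ⟨?_, ?_, ?_⟩
    · have : mink u u = eta (0 : Fin (n+1)) * u 0 + eta j * u j := by
        unfold mink
        calc ∑ c, eta c * u c * u c
            = ∑ c, ((eta c * u c) * (if c = 0 then 1 else 0)
              + (eta c * u c) * (if c = j then 1 else 0)) := by
              refine Finset.sum_congr rfl fun c _ => ?_
              rw [mul_assoc]; nth_rewrite 2 [hu]; ring
          _ = eta 0 * u 0 + eta j * u j := by
              simp only [Finset.sum_add_distrib, mul_ite, mul_one, mul_zero,
                Finset.sum_ite_eq', Finset.mem_univ, if_true]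
      rw [this]
      by_cases hj : j = 0
      · subst hj; simp [hu, eta]
      · simp [hu, eta, hj, Ne.symm hj]
    · intro h0
      have : u 0 = 0 := by rw [h0]; rfl
      simp only [hu, if_true] at this
      by_cases hj : (0 : Fin (n+1)) = j <;> simp [hj] at this <;> linarith
    · simp only [hu, if_true]
      by_cases hj : (0 : Fin (n+1)) = j <;> simp [hj] <;> norm_num
  have hq : quad (sq1 F) u u = ∑ c, eta c * (F c 0 + F c j) ^ 2 := by
    unfold quad sq1
    simp only [Matrix.of_apply, Finset.mul_sum, Finset.sum_mul]
    rw [Finset.sum_comm]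
    calc ∑ b, ∑ a, ∑ c, u a * (eta c * F c a * F c b) * u b
        = ∑ b, ∑ c, ∑ a, u a * (eta c * F c a * F c b) * u b := by
          exact Finset.sum_congr rfl fun b _ => Finset.sum_comm
      _ = ∑ c, ∑ b, ∑ a, u a * (eta c * F c a * F c b) * u b := Finset.sum_comm
      _ = ∑ c, eta c * (F c 0 + F c j) ^ 2 := by
          refine Finset.sum_congr rfl fun c _ => ?_
          calc ∑ b, ∑ a, u a * (eta c * F c a * F c b) * u b
              = ∑ b, (F c 0 + F c j) * (eta c * F c b * u b) := by
                refine Finset.sum_congr rfl fun b _ => ?_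
                rw [← hw c, Finset.sum_mul]
                exact Finset.sum_congr rfl fun a _ => by ring
            _ = (F c 0 + F c j) * eta c * ∑ b, F c b * u b := by
                rw [Finset.mul_sum]
                exact Finset.sum_congr rfl fun b _ => by ring
            _ = eta c * (F c 0 + F c j) ^ 2 := by rw [hw c]; ring
  have hneg : quad (sq1 F) u u < 0 := by
    rw [hq]
    have h0 : (0 : ℝ) = ∑ _c : Fin (n+1), (0 : ℝ) := by simp
    rw [h0]
    refine Finset.sum_lt_sum (fun c _ => ?_) ⟨m, Finset.mem_univ m, ?_⟩
    · by_cases hc : c = 0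
      · subst hc; rw [hw0]; simp
      · have : eta c = -1 := by simp [eta, hc]
        rw [this]
        nlinarith [sq_nonneg (F c 0 + F c j)]
    · have : eta m = -1 := by simp [eta, hm]
      rw [this]
      have := hwm
      have hp : 0 < (F m 0 + F m j) ^ 2 :=
        lt_of_le_of_ne (sq_nonneg _) (Ne.symm (pow_ne_zero 2 hwm))
      linarith
  exact absurd (h u u hcf hcf) (by linarith)

/-- for a nonzero 2-form F, the tensor (F×F)_{ab} = F_{ca}F^c{}_b does
not have the dominant property. -/
theorem stmt9 {n : ℕ} (F : Matrix (Fin (n + 1)) (Fin (n + 1)) ℝ)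
    (hF : F ≠ 0) (hanti : ∀ a b, F a b = - F b a) :
    ¬ DP2 (sq1 F) := by
  have hFaa : ∀ a, F a a = 0 := fun a => by have := hanti a a; linarith
  by_cases h0 : ∃ k, F 0 k ≠ 0
  · obtain ⟨k, hk⟩ := h0
    have hk0 : k ≠ 0 := by rintro rfl; exact hk (hFaa 0)
    refine key F 0 k hk0 ?_ ?_
    · rw [hFaa 0]; ring
    · have h1 : F k 0 = - F 0 k := hanti k 0
      intro hc; rw [h1] at hc; apply hk; linarith
  · push_neg at h0
    have : ∃ i j, F i j ≠ 0 := by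
      by_contra hc; push_neg at hc
      exact hF (by ext i j; simpa using hc i j)
    obtain ⟨i, j, hij⟩ := this
    have hi0 : i ≠ 0 := by rintro rfl; exact hij (h0 j)
    refine key F j i hi0 ?_ ?_
    · rw [hFaa 0, h0 j]; ring
    · have : F i 0 = 0 := by rw [hanti i 0, h0 i]; ring
      rw [this]; simpa using hij
end
end

section
/- A symmetric bilinear form T on a Lorentzian vector space satisfies T = f·g for some scalar f if and only if T(k,k) = 0 for every null vector k. -/
noncomputable section

lemma quad_add_left {n : ℕ} (T : Matrix (Fin (n+1)) (Fin (n+1)) ℝ) (u v w : Fin (n+1) → ℝ) :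
    quad T (u + v) w = quad T u w + quad T v w := by
  simp [quad, add_mul, Finset.sum_add_distrib]

lemma quad_add_right {n : ℕ} (T : Matrix (Fin (n+1)) (Fin (n+1)) ℝ) (u v w : Fin (n+1) → ℝ) :
    quad T u (v + w) = quad T u v + quad T u w := by
  simp [quad, mul_add, Finset.sum_add_distrib]

lemma quad_single {n : ℕ} (T : Matrix (Fin (n+1)) (Fin (n+1)) ℝ) (i j : Fin (n+1)) (c d : ℝ) :
    quad T (Pi.single i c) (Pi.single j d) = c * T i j * d := by
  simp [quad, Pi.single_apply, Finset.sum_ite_eq', mul_comm, mul_assoc, mul_left_comm]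

lemma mink_eq_quad {n : ℕ} (u v : Fin (n+1) → ℝ) : mink u v = quad gMat u v := by
  simp [mink, quad, gMat, Matrix.diagonal_apply, Finset.mul_sum, mul_ite]
  congr 1; funext a; ring

lemma quad_smul {n : ℕ} (f : ℝ) (M : Matrix (Fin (n+1)) (Fin (n+1)) ℝ) (u v : Fin (n+1) → ℝ) :
    quad (f • M) u v = f * quad M u v := by
  simp [quad, Finset.mul_sum]; congr 1; funext a; congr 1; funext b; ring

lemma quad3 {n : ℕ} (M : Matrix (Fin (n+1)) (Fin (n+1)) ℝ) (i j k : Fin (n+1)) (a b c : ℝ) :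
    quad M (Pi.single i a + Pi.single j b + Pi.single k c)
      (Pi.single i a + Pi.single j b + Pi.single k c)
    = a * M i i * a + a * M i j * b + a * M i k * c + b * M j i * a + b * M j j * b
      + b * M j k * c + c * M k i * a + c * M k j * b + c * M k k * c := by
  simp [quad_add_left, quad_add_right, quad_single]; ring

lemma quad2 {n : ℕ} (M : Matrix (Fin (n+1)) (Fin (n+1)) ℝ) (i j : Fin (n+1)) (a b : ℝ) :
    quad M (Pi.single i a + Pi.single j b) (Pi.single i a + Pi.single j b)
    = a * M i i * a + a * M i j * b + b * M j i * a + b * M j j * b := by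
  simp [quad_add_left, quad_add_right, quad_single]; ring

/-- a symmetric bilinear form T equals f·g for some f iff T(k,k) = 0
for every null vector k (dimension ≥ 2). -/
theorem stmt10 {n : ℕ} (T : Matrix (Fin (n + 2)) (Fin (n + 2)) ℝ)
    (hsymm : ∀ a b, T a b = T b a) :
    (∃ f : ℝ, T = f • gMat) ↔
      ∀ k : Fin (n + 2) → ℝ, mink k k = 0 → quad T k k = 0 := by
  constructor
  · rintro ⟨f, rfl⟩ k hk
    rw [quad_smul, ← mink_eq_quad, hk, mul_zero]
  · intro h
    have geta : ∀ a b : Fin (n+2), gMat a b = if a = b then eta a else 0 := by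
      intro a b; simp [gMat, Matrix.diagonal_apply]
    have heta0 : eta (0 : Fin (n+2)) = 1 := by simp [eta]
    have hetai : ∀ i : Fin (n+2), i ≠ 0 → eta i = -1 := by intro i hi; simp [eta, hi]
    -- diagonal and first-row facts
    have hdiag : ∀ i : Fin (n+2), i ≠ 0 → T 0 i = 0 ∧ T i i = -T 0 0 := by
      intro i hi
      have hm : ∀ s : ℝ, mink (Pi.single (0:Fin (n+2)) 1 + Pi.single i s) (Pi.single 0 1 + Pi.single i s) = 1 - s * s := by
        intro s
        rw [mink_eq_quad, quad2]
        simp [geta, heta0, hetai i hi, hi, (Ne.symm hi)]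
        ring
      have h1 := h _ (by rw [hm 1]; ring)
      have h2 := h _ (by rw [hm (-1)]; ring)
      rw [quad2] at h1 h2
      have hs := hsymm i 0
      constructor <;> nlinarith [h1, h2, hs]
    have hcross : ∀ i j : Fin (n+2), i ≠ 0 → j ≠ 0 → i ≠ j → T i j = 0 := by
      intro i j hi hj hij
      have s2 : Real.sqrt 2 * Real.sqrt 2 = 2 := Real.mul_self_sqrt (by norm_num)
      have hm : mink (Pi.single (0:Fin (n+2)) (Real.sqrt 2) + Pi.single i 1 + Pi.single j 1) (Pi.single (0:Fin (n+2)) (Real.sqrt 2) + Pi.single i 1 + Pi.single j 1) = 0 := by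
        rw [mink_eq_quad, quad3]
        simp [geta, heta0, hetai i hi, hetai j hj, hi, hj, hij, Ne.symm hi, Ne.symm hj, Ne.symm hij]
        nlinarith [s2]
      have h1 := h _ hm
      rw [quad3] at h1
      obtain ⟨h0i, hii⟩ := hdiag i hi
      obtain ⟨h0j, hjj⟩ := hdiag j hj
      have hi0 := hsymm i 0
      have hj0 := hsymm j 0
      have hji := hsymm j i
      rw [hi0, hj0, hji, h0i, h0j, hii, hjj] at h1
      linear_combination h1 / 2 - T 0 0 / 2 * s2
    refine ⟨T 0 0, ?_⟩
    ext a b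
    rw [Matrix.smul_apply, geta, smul_eq_mul]
    by_cases hab : a = b
    · subst hab
      by_cases ha : a = 0
      · subst ha; norm_num [heta0]
      · rw [hetai a ha, (hdiag a ha).2]; norm_num
    · simp [hab]
      by_cases ha : a = 0
      · subst ha; exact (hdiag b (fun hb => hab hb.symm)).1
      · by_cases hb : b = 0
        · subst hb; rw [hsymm]; exact (hdiag a ha).1
        · exact hcross a b ha hb hab
end
end

section
/- A rank-2 tensor T on a Lorentzian vector space satisfies (T ₂×₂ T)_{ab} = T_{ac} T_b{}^c = f·g_{ab} for some scalar f if and only if the linear map v^a ↦ v^a T_a{}^b sends every null vector to a null or zero vector (i.e., T defines a null-cone preserving map). -/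
noncomputable section

namespace S11

def qf {n : ℕ} (S : Matrix (Fin (n+1)) (Fin (n+1)) ℝ) (u v : Fin (n+1) → ℝ) : ℝ :=
  ∑ a, ∑ b, u a * S a b * v b

lemma eta_sq {n : ℕ} (i : Fin (n+1)) : eta i * eta i = 1 := by
  unfold eta; split <;> norm_num

lemma qf_add_left {n} (S : Matrix (Fin (n+1)) (Fin (n+1)) ℝ) (u u' v) :
    qf S (u + u') v = qf S u v + qf S u' v := by
  simp [qf, add_mul, Finset.sum_add_distrib]

lemma qf_add_right {n} (S : Matrix (Fin (n+1)) (Fin (n+1)) ℝ) (u v v') :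
    qf S u (v + v') = qf S u v + qf S u v' := by
  simp [qf, mul_add, Finset.sum_add_distrib]

lemma qf_single_single {n} (S : Matrix (Fin (n+1)) (Fin (n+1)) ℝ) (p q x y) :
    qf S (Pi.single p x) (Pi.single q y) = x * S p q * y := by
  simp [qf, Pi.single_apply, Finset.sum_ite_eq, mul_ite, ite_mul]

lemma mink_eq_qf {n} (u v : Fin (n+1) → ℝ) : mink u v = qf gMat u v := by
  simp [mink, qf, gMat, Matrix.diagonal_apply, mul_ite, ite_mul, Finset.sum_ite_eq]
  exact Finset.sum_congr rfl fun i _ => by ring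

lemma key {n} (T : Matrix (Fin (n+1)) (Fin (n+1)) ℝ) (k : Fin (n+1) → ℝ) :
    mink (tmap T k) (tmap T k) = qf (sq2 T) k k := by
  unfold mink tmap qf sq2
  simp only [Matrix.of_apply, Finset.mul_sum, Finset.sum_mul]
  rw [Finset.sum_comm]
  refine Finset.sum_congr rfl fun a _ => ?_
  rw [Finset.sum_comm]
  refine Finset.sum_congr rfl fun c _ => ?_
  refine Finset.sum_congr rfl fun b _ => ?_
  linear_combination (eta b * k a * T a b * k c * T c b) * eta_sq b

end S11

namespace S11

lemma qf_smul {n} (f : ℝ) (S : Matrix (Fin (n+1)) (Fin (n+1)) ℝ) (u v) :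
    qf (f • S) u v = f * qf S u v := by
  simp [qf, Finset.mul_sum]
  exact Finset.sum_congr rfl fun a _ => Finset.sum_congr rfl fun b _ => by ring

lemma qf_pair {n} (S : Matrix (Fin (n+1)) (Fin (n+1)) ℝ) (p q : Fin (n+1)) (x y : ℝ) :
    qf S (Pi.single p x + Pi.single q y) (Pi.single p x + Pi.single q y)
      = x * S p p * x + x * S p q * y + y * S q p * x + y * S q q * y := by
  rw [qf_add_left, qf_add_right, qf_add_right]
  simp [qf_single_single]
  ring

lemma qf_triple {n} (S : Matrix (Fin (n+1)) (Fin (n+1)) ℝ) (p q r : Fin (n+1)) (x y z : ℝ) :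
    qf S (Pi.single p x + Pi.single q y + Pi.single r z)
         (Pi.single p x + Pi.single q y + Pi.single r z)
      = x * S p p * x + x * S p q * y + x * S p r * z
      + y * S q p * x + y * S q q * y + y * S q r * z
      + z * S r p * x + z * S r q * y + z * S r r * z := by
  rw [qf_add_left, qf_add_left, qf_add_right, qf_add_right, qf_add_right,
      qf_add_right, qf_add_right, qf_add_right]
  simp [qf_single_single]
  ring

lemma gMat_ne {n} {p q : Fin (n+1)} (h : p ≠ q) : (gMat : Matrix (Fin (n+1)) (Fin (n+1)) ℝ) p q = 0 :=
  Matrix.diagonal_apply_ne _ h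

lemma gMat_diag {n} (p : Fin (n+1)) : (gMat : Matrix (Fin (n+1)) (Fin (n+1)) ℝ) p p = eta p :=
  Matrix.diagonal_apply_eq _ _

end S11

/-- T_{ac}T_b{}^c = f·g_{ab} for some f iff the map v ↦ v^a T_a{}^b
sends every null vector to a null or zero vector. -/
theorem stmt11 {n : ℕ} (T : Matrix (Fin (n + 1)) (Fin (n + 1)) ℝ) :
    (∃ f : ℝ, sq2 T = f • gMat) ↔
      ∀ k : Fin (n + 1) → ℝ, mink k k = 0 → k ≠ 0 →
        mink (tmap T k) (tmap T k) = 0 := by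
  constructor
  · rintro ⟨f, hf⟩ k hk _
    rw [S11.key, hf, S11.qf_smul, ← S11.mink_eq_qf, hk, mul_zero]
  · intro H
    set S := sq2 T with hS
    have Hq : ∀ k : Fin (n+1) → ℝ, mink k k = 0 → k ≠ 0 → S11.qf S k k = 0 := by
      intro k h1 h2; rw [← S11.key]; exact H k h1 h2
    have hsymm : ∀ a b, S a b = S b a := by
      intro a b
      simp only [hS, sq2, Matrix.of_apply]
      exact Finset.sum_congr rfl fun c _ => by ring
    -- base facts for i ≠ 0
    have base : ∀ (i : Fin (n+1)), i ≠ 0 → ∀ y : ℝ, y * y = 1 →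
        S 0 0 + y * S 0 i + y * S i 0 + y * y * S i i = 0 := by
      intro i hi y hy
      have hk : mink (Pi.single (0 : Fin (n+1)) (1:ℝ) + Pi.single i y)
          (Pi.single 0 1 + Pi.single i y) = 0 := by
        rw [S11.mink_eq_qf, S11.qf_pair, S11.gMat_ne (Ne.symm hi), S11.gMat_ne hi,
            S11.gMat_diag, S11.gMat_diag]
        simp [eta, hi, hy]
      have hne : ((Pi.single 0 1 + Pi.single i y : Fin (n+1) → ℝ)) ≠ 0 := by
        intro h
        have := congrFun h 0
        simp [Pi.single_apply, Ne.symm hi] at this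
      have := Hq _ hk hne
      rw [S11.qf_pair] at this
      linarith [this]
    have h0i : ∀ (i : Fin (n+1)), i ≠ 0 → S 0 i = 0 := by
      intro i hi
      have h1 := base i hi 1 (by norm_num)
      have h2 := base i hi (-1) (by norm_num)
      have hs := hsymm 0 i
      linarith
    have hdiag : ∀ (i : Fin (n+1)), i ≠ 0 → S i i = -S 0 0 := by
      intro i hi
      have h1 := base i hi 1 (by norm_num)
      have hs := hsymm 0 i
      have h0 := h0i i hi
      linarith
    have hoff : ∀ (a b : Fin (n+1)), a ≠ 0 → b ≠ 0 → a ≠ b → S a b = 0 := by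
      intro a b ha hb hab
      set s := Real.sqrt 2 with hsdef
      have hs2 : s * s = 2 := Real.mul_self_sqrt (by norm_num)
      have hk : mink (Pi.single (0 : Fin (n+1)) s + Pi.single a 1 + Pi.single b 1)
          (Pi.single 0 s + Pi.single a 1 + Pi.single b 1) = 0 := by
        rw [S11.mink_eq_qf, S11.qf_triple,
            S11.gMat_ne (Ne.symm ha), S11.gMat_ne (Ne.symm hb), S11.gMat_ne ha,
            S11.gMat_ne hb, S11.gMat_ne hab, S11.gMat_ne (Ne.symm hab),
            S11.gMat_diag, S11.gMat_diag, S11.gMat_diag]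
        simp [eta, ha, hb]
        linarith [hs2]
      have hne : ((Pi.single 0 s + Pi.single a 1 + Pi.single b 1 : Fin (n+1) → ℝ)) ≠ 0 := by
        intro h
        have := congrFun h a
        simp [Pi.single_apply, ha, hab] at this
      have hq := Hq _ hk hne
      rw [S11.qf_triple] at hq
      have e1 := h0i a ha
      have e2 := h0i b hb
      have e3 := hdiag a ha
      have e4 := hdiag b hb
      have e5 := hsymm 0 a
      have e6 := hsymm 0 b
      have e7 := hsymm a b
      linear_combination (1/2)*hq - (S 0 0/2)*hs2 + (s/2)*e5 + (s/2)*e6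
        - s*e1 - s*e2 - (1/2)*e3 - (1/2)*e4 + (1/2)*e7
    refine ⟨S 0 0, ?_⟩
    ext a b
    have hg : (S 0 0 • (gMat : Matrix (Fin (n+1)) (Fin (n+1)) ℝ)) a b
        = S 0 0 * gMat a b := rfl
    rw [hg]
    by_cases hab : a = b
    · subst hab
      by_cases ha : a = 0
      · subst ha; rw [S11.gMat_diag]; simp [eta]
      · rw [S11.gMat_diag]; simp only [eta, if_neg ha]; linarith [hdiag a ha]
    · rw [S11.gMat_ne hab, mul_zero]
      by_cases ha : a = 0
      · subst ha; exact h0i b (fun h => hab h.symm)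
      · by_cases hb : b = 0
        · subst hb; rw [hsymm]; exact h0i a ha
        · exact hoff a b ha hb hab
end
end

section
/- In dimension N > 2, a rank-2 tensor T satisfies T_{ac} T_b{}^c = f·g_{ab} with f ≠ 0 if and only if f > 0 and T^c{}_a T^c{}_b g_{cc'}-contracted on the first indices also equals f·g_{ab}; equivalently, T/√f is a Lorentz transformation. In particular, every non-singular null-cone preserving map is proportional to a Lorentz transformation. -/
noncomputable section

lemma eta_zero {n : ℕ} : (eta (0 : Fin (n+1))) = 1 := if_pos rfl
lemma eta_succ {n : ℕ} (i : Fin n) : eta i.succ = -1 := if_neg (Fin.succ_ne_zero i)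
lemma eta_sq {n : ℕ} (i : Fin (n+1)) : eta i * eta i = 1 := by
  unfold eta; split <;> norm_num

lemma mink_expand_s13 {n : ℕ} (u v : Fin (n+1) → ℝ) :
    mink u v = u 0 * v 0 - ∑ i : Fin n, u i.succ * v i.succ := by
  unfold mink
  rw [Fin.sum_univ_succ, eta_zero]
  simp only [eta_succ, neg_mul, one_mul]
  rw [Finset.sum_neg_distrib]
  ring

lemma orth_timelike {n : ℕ} {u v : Fin (n+1) → ℝ} (hu : 0 < mink u u)
    (huv : mink u v = 0) : mink v v ≤ 0 := by
  rw [mink_expand_s13] at hu huv ⊢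
  set a := u 0 with ha
  set b := v 0 with hb
  set P := ∑ i : Fin n, u i.succ * u i.succ with hP'
  set Q := ∑ i : Fin n, v i.succ * v i.succ with hQ'
  set R := ∑ i : Fin n, u i.succ * v i.succ with hR'
  have hP : 0 ≤ P := Finset.sum_nonneg fun i _ => mul_self_nonneg _
  have hQ : 0 ≤ Q := Finset.sum_nonneg fun i _ => mul_self_nonneg _
  have hCS : R * R ≤ P * Q := by
    have := Finset.sum_mul_sq_le_sq_mul_sq Finset.univ (fun i : Fin n => u i.succ)
      (fun i : Fin n => v i.succ)
    simpa [pow_two] using this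
  have hab : a * b = R := by linarith
  have h1 : (a * a) * (b * b) ≤ P * Q := by
    have : (a*b) * (a*b) = R * R := by rw [hab]
    nlinarith
  have h2 : P * Q ≤ (a * a) * Q := mul_le_mul_of_nonneg_right (by linarith) hQ
  have h3 : (a*a) * (b*b) ≤ (a*a) * Q := le_trans h1 h2
  have ha2 : 0 < a * a := by nlinarith
  have := le_of_mul_le_mul_left h3 ha2
  linarith

open Matrix

lemma gMat_mul_self {n : ℕ} : (gMat (n := n)) * gMat = 1 := by
  rw [gMat, Matrix.diagonal_mul_diagonal]
  rw [show (fun i => eta i * eta i : Fin (n+1) → ℝ) = fun _ => 1 from funext eta_sq]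
  exact Matrix.diagonal_one

lemma sq2_eq {n : ℕ} (T : Matrix (Fin (n+1)) (Fin (n+1)) ℝ) :
    sq2 T = T * gMat * Tᵀ := by
  ext a b
  simp only [sq2, Matrix.of_apply, gMat, Matrix.mul_apply, Matrix.transpose_apply,
    Matrix.diagonal_apply, mul_ite, ite_mul, mul_zero, zero_mul,
    Finset.sum_ite_eq', Finset.mem_univ, if_true]
  exact Finset.sum_congr rfl fun c _ => by ring

lemma sq1_eq {n : ℕ} (T : Matrix (Fin (n+1)) (Fin (n+1)) ℝ) :
    sq1 T = Tᵀ * gMat * T := by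
  ext a b
  simp only [sq1, Matrix.of_apply, gMat, Matrix.mul_apply, Matrix.transpose_apply,
    Matrix.diagonal_apply, mul_ite, ite_mul, mul_zero, zero_mul,
    Finset.sum_ite_eq', Finset.mem_univ, if_true]
  exact Finset.sum_congr rfl fun c _ => by ring

lemma flipT {n : ℕ} (T : Matrix (Fin (n+1)) (Fin (n+1)) ℝ) {f : ℝ} (hf : f ≠ 0)
    (h : T * gMat * Tᵀ = f • gMat) : Tᵀ * gMat * T = f • gMat := by
  have h1 : T * (gMat * Tᵀ * gMat) = f • (1 : Matrix (Fin (n+1)) (Fin (n+1)) ℝ) := by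
    calc T * (gMat * Tᵀ * gMat) = (T * gMat * Tᵀ) * gMat := by
          simp only [Matrix.mul_assoc]
      _ = (f • gMat) * gMat := by rw [h]
      _ = f • (gMat * gMat) := by rw [Matrix.smul_mul]
      _ = f • 1 := by rw [gMat_mul_self]
  have h2 : T * (f⁻¹ • (gMat * Tᵀ * gMat)) = 1 := by
    rw [Matrix.mul_smul, h1, smul_smul, inv_mul_cancel₀ hf, one_smul]
  have h3 : (f⁻¹ • (gMat * Tᵀ * gMat)) * T = 1 := mul_eq_one_comm.mp h2
  have h4 : gMat * Tᵀ * gMat * T = f • 1 := by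
    have := congrArg (fun M => f • M) h3
    simpa [Matrix.smul_mul, smul_smul, mul_inv_cancel₀ hf] using this
  calc Tᵀ * gMat * T = gMat * (gMat * Tᵀ * gMat * T) := by
        simp only [← Matrix.mul_assoc, gMat_mul_self, Matrix.one_mul]
    _ = gMat * (f • 1) := by rw [h4]
    _ = f • gMat := by rw [Matrix.mul_smul, Matrix.mul_one]

lemma f_pos {n : ℕ} (T : Matrix (Fin (n+3)) (Fin (n+3)) ℝ) {f : ℝ} (hf : f ≠ 0)
    (h : sq2 T = f • gMat) : 0 < f := by
  have h10 : (1 : Fin (n+3)) ≠ 0 := by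
    simp [Fin.ext_iff]
  have h20 : (2 : Fin (n+3)) ≠ 0 := by
    simp [Fin.ext_iff, Fin.val_two]; rw [Nat.mod_eq_of_lt (by omega)]; omega
  have h12 : (1 : Fin (n+3)) ≠ 2 := by
    simp [Fin.ext_iff, Fin.val_two]; rw [Nat.mod_eq_of_lt (by omega)]; omega
  have hab : ∀ a b, mink (T a) (T b) = f * gMat a b := by
    intro a b
    have := congrFun (congrFun h a) b
    simpa [mink, sq2, Matrix.smul_apply, smul_eq_mul] using this
  have e1 : mink (T 1) (T 1) = -f := by
    rw [hab, gMat, Matrix.diagonal_apply_eq]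
    rw [show eta (1 : Fin (n+3)) = -1 from if_neg h10]; ring
  have e2 : mink (T 2) (T 2) = -f := by
    rw [hab, gMat, Matrix.diagonal_apply_eq]
    rw [show eta (2 : Fin (n+3)) = -1 from if_neg h20]; ring
  have e12 : mink (T 1) (T 2) = 0 := by
    rw [hab, gMat, Matrix.diagonal_apply_ne _ h12]; ring
  rcases hf.lt_or_gt with hlt | hgt
  · exfalso
    have := orth_timelike (u := T 1) (v := T 2) (by rw [e1]; linarith) e12
    rw [e2] at this; linarith
  · exact hgt

lemma sq2_smul {n : ℕ} (c : ℝ) (S : Matrix (Fin (n+1)) (Fin (n+1)) ℝ) :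
    sq2 (c • S) = (c * c) • sq2 S := by
  ext a b
  simp only [sq2, Matrix.of_apply, Matrix.smul_apply, smul_eq_mul, Finset.mul_sum]
  exact Finset.sum_congr rfl fun i _ => by ring

lemma mink_tmap {n : ℕ} (S : Matrix (Fin (n+1)) (Fin (n+1)) ℝ) (u v : Fin (n+1) → ℝ) :
    mink (tmap S u) (tmap S v) = ∑ a, ∑ b, u a * v b * sq2 S a b := by
  unfold mink tmap sq2
  simp only [Matrix.of_apply]
  have step : ∀ c : Fin (n+1),
      eta c * (eta c * ∑ a, u a * S a c) * (eta c * ∑ b, v b * S b c)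
        = ∑ a, ∑ b, u a * v b * (eta c * S a c * S b c) := by
    intro c
    have h1 : eta c * (eta c * ∑ a, u a * S a c) * (eta c * ∑ b, v b * S b c)
        = (eta c * eta c) * (eta c * ((∑ a, u a * S a c) * (∑ b, v b * S b c))) := by ring
    rw [h1, eta_sq, one_mul, Finset.sum_mul_sum, Finset.mul_sum]
    refine Finset.sum_congr rfl fun a _ => ?_
    rw [Finset.mul_sum]
    exact Finset.sum_congr rfl fun b _ => by ring
  calc (∑ c, eta c * (eta c * ∑ a, u a * S a c) * (eta c * ∑ b, v b * S b c))
      = ∑ c, ∑ a, ∑ b, u a * v b * (eta c * S a c * S b c) :=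
        Finset.sum_congr rfl fun c _ => step c
    _ = ∑ a, ∑ c, ∑ b, u a * v b * (eta c * S a c * S b c) := Finset.sum_comm
    _ = ∑ a, ∑ b, ∑ c, u a * v b * (eta c * S a c * S b c) :=
        Finset.sum_congr rfl fun a _ => Finset.sum_comm
    _ = ∑ a, ∑ b, u a * v b * ∑ c, eta c * S a c * S b c := by
        simp [Finset.mul_sum]

lemma quadg {n : ℕ} (u v : Fin (n+1) → ℝ) :
    ∑ a, ∑ b, u a * v b * gMat a b = mink u v := by
  unfold gMat mink
  simp only [Matrix.diagonal_apply, mul_ite, mul_zero, Finset.sum_ite_eq,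
    Finset.mem_univ, if_true]
  exact Finset.sum_congr rfl fun a _ => by ring


/-- in dimension > 2, T_{ac}T_b{}^c = f·g with f ≠ 0 iff f > 0 and the
first-index contraction T_{ca}T^c{}_b also equals f·g; equivalently T/√f is a
Lorentz transformation. -/
theorem stmt13 {n : ℕ} (T : Matrix (Fin (n + 3)) (Fin (n + 3)) ℝ) (f : ℝ) :
    ((sq2 T = f • gMat ∧ f ≠ 0) ↔ (0 < f ∧ sq1 T = f • gMat)) ∧
    (sq2 T = f • gMat → f ≠ 0 →
      ∀ u v : Fin (n + 3) → ℝ,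
        mink (tmap ((Real.sqrt f)⁻¹ • T) u) (tmap ((Real.sqrt f)⁻¹ • T) v)
          = mink u v) := by
  constructor
  · constructor
    · rintro ⟨h, hf⟩
      refine ⟨f_pos T hf h, ?_⟩
      rw [sq1_eq]
      exact flipT T hf (by rw [← sq2_eq, h])
    · rintro ⟨hpos, h⟩
      have hf : f ≠ 0 := ne_of_gt hpos
      refine ⟨?_, hf⟩
      rw [sq2_eq]
      have := flipT Tᵀ hf (by rw [Matrix.transpose_transpose, ← sq1_eq, h])
      simpa [Matrix.transpose_transpose] using this
  · intro h hf u v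
    have hpos : 0 < f := f_pos T hf h
    have hc : (Real.sqrt f)⁻¹ * (Real.sqrt f)⁻¹ * f = 1 := by
      rw [← mul_inv, Real.mul_self_sqrt hpos.le, inv_mul_cancel₀ hf]
    rw [mink_tmap, sq2_smul, h, smul_smul, hc, one_smul, quadg]
end
end

section
/- Let T be a null-cone bi-preserving rank-2 tensor with symmetric part S and antisymmetric part F (so (S×S) + (F×F) = f·g and (S×F)_{(ab)} = 0). Then every null eigenvector of S is a null eigenvector of F, and every eigenvector of F with nonzero eigenvalue is a null eigenvector of S. -/
noncomputable section

/-- k is an eigenvector of the rank-2 tensor A with eigenvalue lam: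
k^a A_a{}^b = lam k^b. -/
def eig {n : ℕ} (A : Matrix (Fin (n + 1)) (Fin (n + 1)) ℝ) (k : Fin (n + 1) → ℝ)
    (lam : ℝ) : Prop :=
  ∀ b, eta b * ∑ a, k a * A a b = lam * k b


open Matrix

section Helpers

variable {n : ℕ}

lemma eta_mul_self (i : Fin (n+1)) : eta i * eta i = 1 := by
  unfold eta; split <;> norm_num

lemma gMat_sq : (gMat (n := n)) * gMat = 1 := by
  rw [gMat, Matrix.diagonal_mul_diagonal,
    show (fun i => eta i * eta i) = fun _ : Fin (n+1) => (1:ℝ) from funext eta_mul_self,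
    Matrix.diagonal_one]

lemma gMat_t : (gMat (n := n))ᵀ = gMat := Matrix.diagonal_transpose eta

lemma smul_vecMul' (c : ℝ) (v : Fin (n+1) → ℝ) (M : Matrix (Fin (n+1)) (Fin (n+1)) ℝ) :
    (c • v) ᵥ* M = c • (v ᵥ* M) := by
  ext b; simp [Matrix.vecMul, dotProduct, Finset.mul_sum, mul_assoc]

lemma vecMul_smul' (c : ℝ) (v : Fin (n+1) → ℝ) (M : Matrix (Fin (n+1)) (Fin (n+1)) ℝ) :
    v ᵥ* (c • M) = c • (v ᵥ* M) := by
  ext b; simp [Matrix.vecMul, dotProduct, Finset.mul_sum]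
  apply Finset.sum_congr rfl; intros; ring

lemma vecMul_sub' (v : Fin (n+1) → ℝ) (M N : Matrix (Fin (n+1)) (Fin (n+1)) ℝ) :
    v ᵥ* (M - N) = v ᵥ* M - v ᵥ* N := by
  ext b
  simp [Matrix.vecMul, dotProduct, Matrix.sub_apply, mul_sub, Finset.sum_sub_distrib]

lemma vecMul_add' (v : Fin (n+1) → ℝ) (M N : Matrix (Fin (n+1)) (Fin (n+1)) ℝ) :
    v ᵥ* (M + N) = v ᵥ* M + v ᵥ* N := by
  ext b
  simp [Matrix.vecMul, dotProduct, Matrix.add_apply, mul_add, Finset.sum_add_distrib]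

lemma vecMul_neg' (v : Fin (n+1) → ℝ) (M : Matrix (Fin (n+1)) (Fin (n+1)) ℝ) :
    v ᵥ* (-M) = -(v ᵥ* M) := by
  ext b; simp [Matrix.vecMul, dotProduct]

lemma neg_dot' (u v : Fin (n+1) → ℝ) : (-u) ⬝ᵥ v = -(u ⬝ᵥ v) := by
  simp [dotProduct]

lemma smul_dot' (c : ℝ) (u v : Fin (n+1) → ℝ) : (c • u) ⬝ᵥ v = c * (u ⬝ᵥ v) := by
  simp [dotProduct, Finset.mul_sum, mul_assoc]

lemma mink_symm (u v : Fin (n+1) → ℝ) : mink u v = mink v u := by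
  unfold mink; apply Finset.sum_congr rfl; intros; ring

lemma mink_dot (u v : Fin (n+1) → ℝ) : mink u v = (u ᵥ* gMat) ⬝ᵥ v := by
  unfold mink gMat
  simp [dotProduct, Matrix.vecMul_diagonal]
  apply Finset.sum_congr rfl; intros; ring

lemma mink_smul_left (c : ℝ) (u v : Fin (n+1) → ℝ) : mink (c • u) v = c * mink u v := by
  unfold mink; rw [Finset.mul_sum]; apply Finset.sum_congr rfl; intros; simp; ring

lemma eig_iff (A : Matrix (Fin (n+1)) (Fin (n+1)) ℝ) (k : Fin (n+1) → ℝ) (lam : ℝ) :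
    eig A k lam ↔ k ᵥ* (A * gMat) = lam • k := by
  unfold eig
  constructor
  · intro h; ext b
    have := h b
    simp only [Matrix.vecMul, dotProduct, gMat, Matrix.mul_diagonal, Pi.smul_apply,
      smul_eq_mul]
    rw [← this, Finset.mul_sum]
    apply Finset.sum_congr rfl; intros; ring
  · intro h b
    have := congrFun h b
    simp only [Matrix.vecMul, dotProduct, gMat, Matrix.mul_diagonal, Pi.smul_apply,
      smul_eq_mul] at this
    rw [← this, Finset.mul_sum]
    apply Finset.sum_congr rfl; intros; ring

lemma dot_cross (u v : Fin (n+1) → ℝ) (A B : Matrix (Fin (n+1)) (Fin (n+1)) ℝ) :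
    (u ᵥ* A) ⬝ᵥ (v ᵥ* B) = (u ᵥ* (A * Bᵀ)) ⬝ᵥ v := by
  rw [← Matrix.mulVec_transpose B v, dotProduct_mulVec, Matrix.vecMul_vecMul]

lemma dot_expand (u v : Fin (n+1) → ℝ) (M : Matrix (Fin (n+1)) (Fin (n+1)) ℝ) :
    (u ᵥ* M) ⬝ᵥ v = ∑ a, ∑ b, u a * M a b * v b := by
  simp only [dotProduct, Matrix.vecMul, Finset.sum_mul]
  rw [Finset.sum_comm]

lemma anti_dot {F : Matrix (Fin (n+1)) (Fin (n+1)) ℝ} (hF : Fᵀ = -F) (u v : Fin (n+1) → ℝ) :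
    (u ᵥ* F) ⬝ᵥ v = -((v ᵥ* F) ⬝ᵥ u) := by
  have hFp : ∀ a b, F b a = - F a b := fun a b => by
    have := congrFun (congrFun hF a) b
    simpa [Matrix.transpose_apply] using this
  rw [dot_expand, dot_expand, Finset.sum_comm, ← Finset.sum_neg_distrib]
  apply Finset.sum_congr rfl; intro i _
  rw [← Finset.sum_neg_distrib]
  apply Finset.sum_congr rfl; intro j _
  rw [hFp i j]; ring

lemma spatial_zero {k : Fin (n+1) → ℝ} (h0 : k 0 = 0) (hk : mink k k = 0) : k = 0 := by
  unfold mink at hk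
  have hterm : ∀ i ∈ Finset.univ, eta i * k i * k i ≤ 0 := by
    intro i _
    by_cases hi : i = (0 : Fin (n+1))
    · subst hi; rw [h0]; simp
    · unfold eta; rw [if_neg hi]; nlinarith [sq_nonneg (k i)]
  have := (Finset.sum_eq_zero_iff_of_nonpos hterm).mp hk
  ext i
  have hi := this i (Finset.mem_univ i)
  by_cases h : i = (0 : Fin (n+1))
  · subst h; simpa using h0
  · unfold eta at hi; rw [if_neg h] at hi; simp; nlinarith

lemma null_prop {k m : Fin (n+1) → ℝ} (hk : mink k k = 0) (hk0 : k ≠ 0)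
    (hm : mink m m = 0) (hmk : mink m k = 0) : ∃ c : ℝ, m = c • k := by
  have hkz : k 0 ≠ 0 := fun h => hk0 (spatial_zero h hk)
  set w : Fin (n+1) → ℝ := k 0 • m - m 0 • k with hw
  have hw0 : w 0 = 0 := by simp [hw]; ring
  have hexp : mink w w = (k 0)^2 * mink m m - (2 * (k 0 * m 0)) * mink m k
      + (m 0)^2 * mink k k := by
    unfold mink
    rw [Finset.mul_sum, Finset.mul_sum, Finset.mul_sum, ← Finset.sum_sub_distrib,
      ← Finset.sum_add_distrib]
    apply Finset.sum_congr rfl; intro i _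
    simp [hw]; ring
  rw [hk, hm, hmk] at hexp
  have hww : mink w w = 0 := by rw [hexp]; ring
  have : w = 0 := spatial_zero hw0 hww
  refine ⟨m 0 / k 0, ?_⟩
  ext i
  have := congrFun this i
  simp [hw] at this ⊢
  field_simp
  nlinarith [this]

lemma collapse (A B : Matrix (Fin (n+1)) (Fin (n+1)) ℝ) :
    (A * gMat * (B * gMat)) * gMat = A * gMat * B := by
  rw [mul_assoc (A * gMat) (B * gMat) gMat, mul_assoc B gMat gMat, gMat_sq, mul_one]

end Helpers

/-- for a null-cone bi-preserving T = S + F, every null eigenvector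
of S is a null eigenvector of F, and every eigenvector of F with nonzero eigenvalue
is a null eigenvector of S. -/
theorem stmt18 {n : ℕ} (T S F : Matrix (Fin (n + 1)) (Fin (n + 1)) ℝ) (f : ℝ)
    (hS : ∀ a b, S a b = (T a b + T b a) / 2)
    (hF : ∀ a b, F a b = (T a b - T b a) / 2)
    (h2 : sq2 T = f • gMat) (h1 : sq1 T = f • gMat) :
    (∀ (k : Fin (n + 1) → ℝ) (lam : ℝ), k ≠ 0 → mink k k = 0 → eig S k lam →
      ∃ mu : ℝ, eig F k mu) ∧
    (∀ (k : Fin (n + 1) → ℝ) (mu : ℝ), k ≠ 0 → mu ≠ 0 → eig F k mu →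
      mink k k = 0 ∧ ∃ lam : ℝ, eig S k lam) := by
  have hSt : Sᵀ = S := by
    ext a b; simp only [Matrix.transpose_apply, hS]; ring
  have hFt : Fᵀ = -F := by
    ext a b; simp only [Matrix.transpose_apply, Matrix.neg_apply, hF]; ring
  have hSm : S = (2⁻¹ : ℝ) • (T + Tᵀ) := by
    ext a b
    simp only [hS, Matrix.smul_apply, Matrix.add_apply, Matrix.transpose_apply, smul_eq_mul]
    ring
  have hFm : F = (2⁻¹ : ℝ) • (T - Tᵀ) := by
    ext a b
    simp only [hF, Matrix.smul_apply, Matrix.sub_apply, Matrix.transpose_apply, smul_eq_mul]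
    ring
  have h2' : T * gMat * Tᵀ = f • gMat := by
    rw [← h2]
    ext a b
    simp only [sq2, Matrix.mul_apply, gMat, Matrix.transpose_apply, Matrix.of_apply]
    apply Finset.sum_congr rfl; intro c _
    simp only [Matrix.diagonal_apply, mul_ite, mul_zero, Finset.sum_ite_eq',
      Finset.mem_univ, if_true]
    ring
  have h1' : Tᵀ * gMat * T = f • gMat := by
    rw [← h1]
    ext a b
    simp only [sq1, Matrix.mul_apply, gMat, Matrix.transpose_apply, Matrix.of_apply]
    apply Finset.sum_congr rfl; intro c _
    simp only [Matrix.diagonal_apply, mul_ite, mul_zero, Finset.sum_ite_eq',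
      Finset.mem_univ, if_true]
    ring
  have e1 : S * gMat * S - F * gMat * F = f • gMat := by
    rw [hSm, hFm]
    have hX : (T+Tᵀ)*gMat*(T+Tᵀ) - (T-Tᵀ)*gMat*(T-Tᵀ)
        = (T*gMat*Tᵀ + Tᵀ*gMat*T) + (T*gMat*Tᵀ + Tᵀ*gMat*T) := by
      simp only [Matrix.add_mul, Matrix.mul_add, Matrix.sub_mul, Matrix.mul_sub]
      abel
    calc ((2⁻¹:ℝ)•(T+Tᵀ))*gMat*((2⁻¹:ℝ)•(T+Tᵀ)) - ((2⁻¹:ℝ)•(T-Tᵀ))*gMat*((2⁻¹:ℝ)•(T-Tᵀ))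
        = (4⁻¹:ℝ) • ((T+Tᵀ)*gMat*(T+Tᵀ) - (T-Tᵀ)*gMat*(T-Tᵀ)) := by
          simp only [Matrix.smul_mul, Matrix.mul_smul, smul_smul]
          rw [← smul_sub]; norm_num
      _ = (4⁻¹:ℝ) • ((f•gMat + f•gMat) + (f•gMat + f•gMat)) := by rw [hX, h2', h1']
      _ = f • gMat := by
          ext a b
          simp only [Matrix.smul_apply, Matrix.add_apply, smul_eq_mul]
          ring
  have e2 : S * gMat * F = F * gMat * S := by
    rw [hSm, hFm]
    have hX : (T+Tᵀ)*gMat*(T-Tᵀ) - (T-Tᵀ)*gMat*(T+Tᵀ)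
        = (Tᵀ*gMat*T + Tᵀ*gMat*T) - (T*gMat*Tᵀ + T*gMat*Tᵀ) := by
      simp only [Matrix.add_mul, Matrix.mul_add, Matrix.sub_mul, Matrix.mul_sub]
      abel
    have hz : ((2⁻¹:ℝ)•(T+Tᵀ))*gMat*((2⁻¹:ℝ)•(T-Tᵀ))
        - ((2⁻¹:ℝ)•(T-Tᵀ))*gMat*((2⁻¹:ℝ)•(T+Tᵀ)) = 0 := by
      calc ((2⁻¹:ℝ)•(T+Tᵀ))*gMat*((2⁻¹:ℝ)•(T-Tᵀ)) - ((2⁻¹:ℝ)•(T-Tᵀ))*gMat*((2⁻¹:ℝ)•(T+Tᵀ))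
          = (4⁻¹:ℝ) • ((T+Tᵀ)*gMat*(T-Tᵀ) - (T-Tᵀ)*gMat*(T+Tᵀ)) := by
            simp only [Matrix.smul_mul, Matrix.mul_smul, smul_smul]
            rw [← smul_sub]; norm_num
        _ = (4⁻¹:ℝ) • ((f•gMat + f•gMat) - (f•gMat + f•gMat)) := by rw [hX, h1', h2']
        _ = 0 := by simp
    exact sub_eq_zero.mp hz
  have hPP : S*gMat*(S*gMat) - F*gMat*(F*gMat) = f • (1 : Matrix (Fin (n+1)) (Fin (n+1)) ℝ) := by
    have h := congrArg (fun M => M * gMat) e1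
    simp only [Matrix.sub_mul, Matrix.smul_mul, gMat_sq] at h
    rw [mul_assoc (S*gMat) S gMat, mul_assoc (F*gMat) F gMat] at h
    exact h
  have hPQ : (S*gMat)*(F*gMat) = (F*gMat)*(S*gMat) := by
    have h := congrArg (fun M => M * gMat) e2
    rw [mul_assoc (S*gMat) F gMat, mul_assoc (F*gMat) S gMat] at h
    exact h
  constructor
  · -- part 1
    intro k lam hk0 hknull hks
    rw [eig_iff] at hks
    set m := k ᵥ* (F * gMat) with hm
    have hmg : m ᵥ* gMat = k ᵥ* F := by
      rw [hm, Matrix.vecMul_vecMul, mul_assoc, gMat_sq, mul_one]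
    have hmk : mink m k = 0 := by
      rw [mink_dot, hmg]
      have := anti_dot hFt k k
      linarith
    have hqq : k ᵥ* (F*gMat*(F*gMat)) = (lam*lam - f) • k := by
      have hQQeq : F*gMat*(F*gMat)
          = S*gMat*(S*gMat) - f • (1 : Matrix (Fin (n+1)) (Fin (n+1)) ℝ) := by
        rw [← hPP]; abel
      rw [hQQeq, vecMul_sub', vecMul_smul', Matrix.vecMul_one, ← Matrix.vecMul_vecMul, hks,
        smul_vecMul', hks, smul_smul, ← sub_smul]
    have hFg_t : F * (F*gMat)ᵀ = -((F*gMat*(F*gMat))*gMat) := by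
      rw [Matrix.transpose_mul, gMat_t, hFt, collapse, Matrix.mul_neg, Matrix.mul_neg,
        ← mul_assoc]
    have hmm : mink m m = 0 := by
      rw [mink_dot, hmg, hm, dot_cross, hFg_t, vecMul_neg', neg_dot',
        ← Matrix.vecMul_vecMul, hqq, smul_vecMul', smul_dot', ← mink_dot, hknull]
      ring
    obtain ⟨c, hc⟩ := null_prop hknull hk0 hmm hmk
    exact ⟨c, (eig_iff F k c).mpr hc⟩
  · -- part 2
    intro k mu hk0 hmu hkF
    rw [eig_iff] at hkF
    have hkFg : k ᵥ* F = (k ᵥ* (F * gMat)) ᵥ* gMat := by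
      rw [Matrix.vecMul_vecMul, mul_assoc, gMat_sq, mul_one]
    have hknull : mink k k = 0 := by
      have ha : mink (k ᵥ* (F*gMat)) k = mu * mink k k := by rw [hkF, mink_smul_left]
      have hb : mink (k ᵥ* (F*gMat)) k = 0 := by
        rw [mink_dot, ← hkFg]
        have := anti_dot hFt k k
        linarith
      have : mu * mink k k = 0 := by linarith
      exact (mul_eq_zero.mp this).resolve_left hmu
    refine ⟨hknull, ?_⟩
    set p := k ᵥ* (S * gMat) with hp
    have hpg : p ᵥ* gMat = k ᵥ* S := by
      rw [hp, Matrix.vecMul_vecMul, mul_assoc, gMat_sq, mul_one]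
    have hqq : k ᵥ* (F*gMat*(F*gMat)) = (mu*mu) • k := by
      rw [← Matrix.vecMul_vecMul, hkF, smul_vecMul', hkF, smul_smul]
    have hppk : k ᵥ* (S*gMat*(S*gMat)) = (mu*mu + f) • k := by
      have hPPeq : S*gMat*(S*gMat)
          = F*gMat*(F*gMat) + f • (1 : Matrix (Fin (n+1)) (Fin (n+1)) ℝ) := by
        rw [← hPP]; abel
      rw [hPPeq, vecMul_add', vecMul_smul', Matrix.vecMul_one, hqq, ← add_smul]
    have hSg_t : S * (S*gMat)ᵀ = (S*gMat*(S*gMat))*gMat := by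
      rw [Matrix.transpose_mul, gMat_t, hSt, collapse, ← mul_assoc]
    have hpm : mink p p = 0 := by
      rw [mink_dot, hpg, hp, dot_cross, hSg_t, ← Matrix.vecMul_vecMul, hppk, smul_vecMul',
        smul_dot', ← mink_dot, hknull]
      ring
    have hpk : mink p k = 0 := by
      have hpq : p ᵥ* (F*gMat) = mu • p := by
        rw [hp, Matrix.vecMul_vecMul, hPQ, ← Matrix.vecMul_vecMul, hkF, smul_vecMul']
      have ha : mink (p ᵥ* (F*gMat)) k = mu * mink p k := by rw [hpq, mink_smul_left]
      have hb : mink (p ᵥ* (F*gMat)) k = -(mu * mink p k) := by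
        rw [mink_dot, Matrix.vecMul_vecMul, mul_assoc, gMat_sq, mul_one, anti_dot hFt,
          hkFg, hkF, smul_vecMul', smul_dot', ← mink_dot, mink_symm]
      have : mu * mink p k = 0 := by linarith
      exact (mul_eq_zero.mp this).resolve_left hmu
    obtain ⟨lam, hlam⟩ := null_prop hknull hk0 hpm hpk
    exact ⟨lam, (eig_iff S k lam).mpr hlam⟩
end
end
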